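/- Let E be a finite-dimensional real inner product space, F : E → ℝ continuously differentiable with F ≥ 0, λ ≥ 0, and w* ∈ E. Suppose that for every w₀ ∈ E there exists a gradient-flow trajectory w : [0,∞) → E of F with w(0) = w₀ satisfying F(w(t)) ≤ λ·(‖w₀ − w*‖² − ‖w(t) − w*‖²) / (2t) for every t > 0. Then F is λ-linearizable with respect to w*: F(u) ≤ λ⟨∇F(u), u − w*⟩ for every u ∈ E. -/

import Mathlib

open RealInnerProductSpace Filter Topology

/-- The corresponding convergence rate for gradient flow from every initial point
implies λ-linearizability. -/
theorem gradient_flow_rate_implies_linearizable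
    {E : Type*} [NormedAddCommGroup E] [InnerProductSpace ℝ E] [FiniteDimensional ℝ E]
    (F : E → ℝ) (hF : ContDiff ℝ 1 F) (hFnonneg : ∀ u, 0 ≤ F u)
    (lam : ℝ) (hlam : 0 ≤ lam) (wstar : E)
    (hrate : ∀ w₀ : E, ∃ w : ℝ → E, w 0 = w₀ ∧
      (∀ t : ℝ, 0 ≤ t → HasDerivAt w (-gradient F (w t)) t) ∧
      (∀ t : ℝ, 0 < t →
        F (w t) ≤ lam * (‖w₀ - wstar‖ ^ 2 - ‖w t - wstar‖ ^ 2) / (2 * t))) :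
    ∀ u : E, F u ≤ lam * ⟪gradient F u, u - wstar⟫ := by
  intro u
  obtain ⟨w, hw0, hderiv, hrate'⟩ := hrate u
  have hw0' : HasDerivAt w (-gradient F u) 0 := by
    simpa [hw0] using hderiv 0 le_rfl
  set g : ℝ → ℝ := fun t => ‖w t - wstar‖ ^ 2 with hgdef
  have h1 : HasDerivAt (fun t => w t - wstar) (-gradient F u) 0 := hw0'.sub_const wstar
  have hg : HasDerivAt g (2 * ⟪-gradient F u, u - wstar⟫) 0 := by
    have := h1.inner ℝ h1
    have heq : g = fun t => ⟪w t - wstar, w t - wstar⟫ := by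
      funext t
      simp [hgdef, real_inner_self_eq_norm_sq]
    rw [heq]
    convert this using 1
    · rfl
    · rfl
    simp [hw0, real_inner_comm]
    ring
  -- slope limit on 𝓝[>] 0
  have hslope : Tendsto (slope g 0) (𝓝[>] (0:ℝ))
      (𝓝 (2 * ⟪-gradient F u, u - wstar⟫)) :=
    (hasDerivAt_iff_tendsto_slope.mp hg).mono_left
      (nhdsWithin_mono _ (fun x hx => ne_of_gt hx))
  have hRHS : Tendsto (fun t => lam * (‖u - wstar‖ ^ 2 - ‖w t - wstar‖ ^ 2) / (2 * t))
      (𝓝[>] (0:ℝ)) (𝓝 (lam * ⟪gradient F u, u - wstar⟫)) := by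
    have hmul : Tendsto (fun t => (-(lam/2)) * slope g 0 t) (𝓝[>] (0:ℝ))
        (𝓝 ((-(lam/2)) * (2 * ⟪-gradient F u, u - wstar⟫))) :=
      hslope.const_mul _
    have hval : (-(lam/2)) * (2 * ⟪-gradient F u, u - wstar⟫)
        = lam * ⟪gradient F u, u - wstar⟫ := by
      simp [inner_neg_left]
      ring
    rw [hval] at hmul
    refine hmul.congr' ?_
    filter_upwards [self_mem_nhdsWithin] with t ht
    have ht' : (t:ℝ) ≠ 0 := ne_of_gt ht
    simp only [slope_def_field, hgdef]
    rw [hw0] at *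
    field_simp
    ring
  have hLHS : Tendsto (fun t => F (w t)) (𝓝[>] (0:ℝ)) (𝓝 (F u)) := by
    have : ContinuousAt (fun t => F (w t)) 0 :=
      (hF.continuous.continuousAt).comp hw0'.continuousAt
    have := this.tendsto
    rw [hw0] at this
    exact this.mono_left nhdsWithin_le_nhds
  refine le_of_tendsto_of_tendsto hLHS hRHS ?_
  filter_upwards [self_mem_nhdsWithin] with t ht using hrate' t ht
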